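/- Let X be a mixing subshift of finite type and f : X → X a surjective cellular automaton. Then f is injective if and only if f is von Neumann regular in End(X). -/

import Mathlib

/-- The shift map on the full shift `A^ℤ`: `σ(x)_i = x_{i+1}`. -/
def shiftMap {A : Type*} (x : ℤ → A) : ℤ → A := fun i => x (i + 1)

/-- A cellular automaton on the full shift `A^ℤ` (with the product topology,
`A` discrete): a continuous map commuting with the shift. -/
def IsCA {A : Type*} [TopologicalSpace A] (f : (ℤ → A) → (ℤ → A)) : Prop :=
  Continuous f ∧ ∀ x, f (shiftMap x) = shiftMap (f x)

/-- `f` is von Neumann regular in the monoid `End(A^ℤ)` of cellular automata: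
there is a CA `h` with `f ∘ h ∘ f = f` and `h ∘ f ∘ h = h`. -/
def IsRegularCA {A : Type*} [TopologicalSpace A] (f : (ℤ → A) → (ℤ → A)) : Prop :=
  ∃ h : (ℤ → A) → (ℤ → A), IsCA h ∧ f ∘ h ∘ f = f ∧ h ∘ f ∘ h = h

/-- A subshift: a closed, shift-invariant subset of the full shift. -/
def IsSubshift {A : Type*} [TopologicalSpace A] (X : Set (ℤ → A)) : Prop :=
  IsClosed X ∧ shiftMap '' X = X

/-- The finite word `w` occurs as a subword of the bi-infinite sequence `x`. -/
def occursIn {A : Type*} (w : List A) (x : ℤ → A) : Prop :=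
  ∃ i : ℤ, ∀ k : Fin w.length, x (i + (k.val : ℤ)) = w.get k

/-- A subshift of finite type: the set of points avoiding a finite set `F` of
forbidden finite words. -/
def IsSFT {A : Type*} (X : Set (ℤ → A)) : Prop :=
  ∃ F : Set (List A), F.Finite ∧ X = {x | ∀ w ∈ F, ¬ occursIn w x}

/-- The language of a subshift: the finite words occurring in its points. -/
def lang {A : Type*} (X : Set (ℤ → A)) : Set (List A) :=
  {w | ∃ x ∈ X, occursIn w x}

/-- `X` is mixing: for all words `u, v` in the language of `X` there is `N` such
that for every `n ≥ N` some word `u w v` with `|w| = n` is in the language. -/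
def IsMixing {A : Type*} (X : Set (ℤ → A)) : Prop :=
  ∀ u ∈ lang X, ∀ v ∈ lang X, ∃ N : ℕ, ∀ n : ℕ, N ≤ n →
    ∃ w : List A, w.length = n ∧ (u ++ w ++ v) ∈ lang X

/-- A cellular automaton on the subshift `X`: a map `X → X` (presented as a map
of the ambient full shift restricted to `X`) that is continuous on `X` and
commutes with the shift on `X`. -/
def IsCAOn {A : Type*} [TopologicalSpace A] (X : Set (ℤ → A))
    (f : (ℤ → A) → (ℤ → A)) : Prop :=
  Set.MapsTo f X X ∧ ContinuousOn f X ∧ ∀ x ∈ X, f (shiftMap x) = shiftMap (f x)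

/-- `f` is von Neumann regular as an element of the monoid `End(X)` of cellular
automata on `X`: there is a CA `h` on `X` with `f∘h∘f = f` and `h∘f∘h = h` as
maps on `X`. -/
def IsRegularCAOn {A : Type*} [TopologicalSpace A] (X : Set (ℤ → A))
    (f : (ℤ → A) → (ℤ → A)) : Prop :=
  ∃ h : (ℤ → A) → (ℤ → A), IsCAOn X h ∧
    (∀ x ∈ X, f (h (f x)) = f x) ∧ (∀ x ∈ X, h (f (h x)) = h x)

/-- Let `X` be a mixing SFT and `f : X → X` a surjective cellular automaton.
Then `f` is injective if and only if `f` is von Neumann regular in `End(X)`. -/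
lemma shift_iter_apply {A : Type*} (x : ℤ → A) (n : ℕ) (i : ℤ) :
    (shiftMap^[n] x) i = x (i + n) := by
  induction n generalizing x i with
  | zero => simp
  | succ n ih =>
    rw [Function.iterate_succ_apply, ih]
    show x (i + n + 1) = x (i + (n + 1 : ℕ))
    exact congrArg x (by push_cast; ring)

lemma sub_emod_self (a b : ℤ) : (a - b) % b = a % b := by
  have := Int.add_mul_emod_self_left (a - b) b 1
  simpa using this.symm

lemma getElem_congr' {A : Type*} (l : List A) (a b : ℕ) (h : a = b) (hb : b < l.length) :
    l[a]'(h ▸ hb) = l[b] := by subst h; rfl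

lemma periodic_approx {A : Type*}
    (X : Set (ℤ → A)) (hXsft : IsSFT X) (hXmix : IsMixing X)
    (x : ℤ → A) (hx : x ∈ X) (m : ℕ) :
    ∃ p ∈ X, (∃ n : ℕ, 0 < n ∧ shiftMap^[n] p = p) ∧
      ∀ i : ℤ, |i| ≤ (m:ℤ) → p i = x i := by
  obtain ⟨F, hFfin, hXF⟩ := hXsft
  obtain ⟨M, hM⟩ : ∃ M : ℕ, ∀ w ∈ F, w.length ≤ M := by
    obtain ⟨M, hMub⟩ := (hFfin.image List.length).bddAbove
    exact ⟨M, fun w hw => hMub (Set.mem_image_of_mem _ hw)⟩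
  set c : ℕ := m + M with hc
  set L : ℕ := 2 * c + 1 with hL
  set u : List A := List.ofFn (fun k : Fin L => x ((k:ℤ) - c)) with hu
  have hulen : u.length = L := List.length_ofFn
  have hugetn : ∀ (t : ℕ) (ht : t < u.length), u[t] = x ((t:ℤ) - c) :=
    fun t ht => List.getElem_ofFn ht
  have hu_lang : u ∈ lang X := by
    refine ⟨x, hx, -(c:ℤ), fun k => ?_⟩
    rw [List.get_eq_getElem, hugetn k.val k.isLt]
    exact congrArg x (by ring)
  obtain ⟨N, hN⟩ := hXmix u hu_lang u hu_lang
  obtain ⟨w, hwlen, huwu⟩ := hN N le_rfl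
  obtain ⟨z, hzX, j, hj⟩ := huwu
  have hlen : (u ++ w ++ u).length = L + N + L := by
    simp [hulen, hwlen]; omega
  set n : ℕ := L + N with hn
  have hnpos : 0 < n := by omega
  have hznz : (n:ℤ) ≠ 0 := by exact_mod_cast hnpos.ne'
  have hjn : ∀ (t : ℕ) (ht : t < L + N + L), z (j + t) = (u ++ w ++ u)[t]'(hlen ▸ ht) := by
    intro t ht
    have h1 := hj ⟨t, hlen ▸ ht⟩
    rw [List.get_eq_getElem] at h1
    exact h1
  have A1 : ∀ t : ℕ, t < L → z (j + t) = x ((t:ℤ) - c) := by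
    intro t ht
    rw [hjn t (by omega)]
    rw [List.getElem_append, dif_pos (by rw [List.length_append, hulen, hwlen]; omega)]
    rw [List.getElem_append, dif_pos (by omega : t < u.length)]
    exact hugetn t (by omega)
  have A2 : ∀ t : ℕ, t < L → z (j + ((n:ℤ) + t)) = x ((t:ℤ) - c) := by
    intro t ht
    have h1 : ((n + t : ℕ) : ℤ) = (n:ℤ) + t := by push_cast; ring
    rw [← h1, hjn (n + t) (by omega)]
    have hlen2 : (u ++ w).length = n := by rw [List.length_append, hulen, hwlen]
    rw [List.getElem_append, dif_neg (by omega)]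
    rw [getElem_congr' u _ t (by omega) (by omega)]
    exact hugetn t (by omega)
  set p : ℤ → A := fun i => z (j + (i + c) % (n:ℤ)) with hp
  have KC : ∀ (i : ℤ) (t : ℕ), t ≤ M → p (i + t) = z (j + (i + c) % (n:ℤ) + t) := by
    intro i t ht
    set r : ℤ := (i + c) % (n:ℤ) with hr
    have hr0 : 0 ≤ r := Int.emod_nonneg _ hznz
    have hrn : r < n := Int.emod_lt_of_pos _ (by exact_mod_cast hnpos)
    have hML : (M:ℤ) ≤ L := by exact_mod_cast (by omega : M ≤ L)
    have hLn : (L:ℤ) ≤ n := by exact_mod_cast (by omega : L ≤ n)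
    have htM : (t:ℤ) ≤ M := by exact_mod_cast ht
    have hpv : p (i + t) = z (j + (i + t + c) % (n:ℤ)) := by rw [hp]
    have hmod : (i + t + c) % (n:ℤ) = (r + t) % n := by
      rw [hr, Int.emod_add_emod]
      exact congrArg (· % (n:ℤ)) (by ring)
    by_cases hcase : r + t < (n:ℤ)
    · have e : (r + t) % (n:ℤ) = r + t :=
        Int.emod_eq_of_lt (by positivity) hcase
      rw [hpv, hmod, e]
      exact congrArg z (by ring)
    · push_neg at hcase
      have hs0 : 0 ≤ r + t - n := by omega
      set s : ℕ := (r + t - n).toNat with hs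
      have hscast : (s:ℤ) = r + t - n := Int.toNat_of_nonneg hs0
      have hsL : s < L := by
        have : (s:ℤ) < L := by omega
        exact_mod_cast this
      have e : (r + t) % (n:ℤ) = s := by
        rw [← sub_emod_self (r + t) n, ← hscast]
        refine Int.emod_eq_of_lt (by positivity) ?_
        exact_mod_cast (show s < n by omega)
      rw [hpv, hmod, e, A1 s hsL]
      have e2 : j + r + (t:ℤ) = j + ((n:ℤ) + s) := by omega
      rw [e2, A2 s hsL]
  refine ⟨p, ?_, ⟨n, hnpos, ?_⟩, ?_⟩
  · rw [hXF]
    rintro w' hw' ⟨i, hi⟩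
    have hocc : occursIn w' z := by
      refine ⟨j + (i + c) % (n:ℤ), fun k => ?_⟩
      have hk : (k:ℕ) ≤ M := k.isLt.le.trans (hM w' hw')
      rw [← KC i k hk]
      exact hi k
    exact (hXF ▸ hzX) w' hw' hocc
  · funext i
    rw [shift_iter_apply, hp]
    refine congrArg z (congrArg (j + ·) ?_)
    rw [show i + (n:ℤ) + c = (i + c) + (n:ℤ) * 1 by ring, Int.add_mul_emod_self_left]
  · intro i hi
    obtain ⟨hi1, hi2⟩ := abs_le.mp hi
    have hLn : (L:ℤ) ≤ n := by exact_mod_cast (by omega : L ≤ n)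
    have hcL : (c:ℤ) + m < L := by exact_mod_cast (by omega : c + m < L)
    have h1 : (i + c) % (n:ℤ) = i + c :=
      Int.emod_eq_of_lt (by omega) (by omega)
    rw [hp]
    simp only [h1]
    have h2 : 0 ≤ i + c := by omega
    set t : ℕ := (i + c).toNat with hts
    have htc : (t:ℤ) = i + c := Int.toNat_of_nonneg h2
    have htL : t < L := by
      have : (t:ℤ) < L := by omega
      exact_mod_cast this
    rw [show i + (c:ℤ) = (t:ℤ) from htc.symm, A1 t htL]
    exact congrArg x (by omega)

lemma dense_aux {A : Type*} [TopologicalSpace A] [DiscreteTopology A]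
    (Y : Set (ℤ → A)) (x : ℤ → A)
    (hx : ∀ m : ℕ, ∃ p ∈ Y, ∀ i : ℤ, |i| ≤ (m:ℤ) → p i = x i) : x ∈ closure Y := by
  rw [mem_closure_iff_nhds]
  intro U hU
  rw [nhds_pi, Filter.mem_pi] at hU
  obtain ⟨I, hIfin, V, hV, hVU⟩ := hU
  obtain ⟨m, hm⟩ : ∃ m : ℕ, ∀ i ∈ I, |i| ≤ (m:ℤ) := by
    obtain ⟨b, hb⟩ := (hIfin.image Int.natAbs).bddAbove
    refine ⟨b, fun i hi => ?_⟩
    have h1 : i.natAbs ≤ b := hb (Set.mem_image_of_mem _ hi)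
    rw [Int.abs_eq_natAbs]; exact_mod_cast h1
  obtain ⟨p, hpY, hp⟩ := hx m
  refine ⟨p, hVU ?_, hpY⟩
  intro i hi
  rw [hp i (hm i hi)]
  have h2 := hV i
  rw [nhds_discrete A] at h2
  exact h2

lemma periodic_emod {A : Type*} (q : ℤ → A) (n : ℕ)
    (hq : ∀ i : ℤ, q (i + n) = q i) (i : ℤ) : q i = q (i % (n:ℤ)) := by
  have key : ∀ r : ℤ, ∀ d : ℤ, q (r + n * d) = q r := by
    intro r d
    induction d using Int.induction_on with
    | zero => simp
    | succ k ih =>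
      have e : r + (n:ℤ) * (k + 1) = (r + n * k) + n := by ring
      rw [e, hq, ih]
    | pred k ih =>
      have e : r + (n:ℤ) * (-k) = (r + n * (-(k:ℤ) - 1)) + n := by ring
      rw [← ih, e, hq]
  have e2 : i % (n:ℤ) + (n:ℤ) * (i / n) = i := Int.emod_add_mul_ediv i n
  calc q i = q (i % n + n * (i / n)) := by rw [e2]
    _ = q (i % n) := key _ _

theorem stmt9 {A : Type*} [Finite A] [TopologicalSpace A] [DiscreteTopology A]
    (X : Set (ℤ → A)) (hX : IsSubshift X) (hXsft : IsSFT X) (hXmix : IsMixing X)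
    (f : (ℤ → A) → (ℤ → A)) (hf : IsCAOn X f) (hsurj : f '' X = X) :
    Set.InjOn f X ↔ IsRegularCAOn X f := by
  have hSX : ∀ x ∈ X, shiftMap x ∈ X := by
    intro x hx
    rw [← hX.2]
    exact ⟨x, hx, rfl⟩
  have hXc : IsCompact X := hX.1.isCompact
  constructor
  · -- injective → regular
    intro hinj
    by_cases hXe : X = ∅
    · subst hXe
      refine ⟨id, ⟨fun x hx => hx, continuousOn_id, fun x hx => absurd hx (by simp)⟩,
        fun x hx => absurd hx (by simp), fun x hx => absurd hx (by simp)⟩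
    · obtain ⟨x₀, hx₀⟩ := Set.nonempty_iff_ne_empty.mpr hXe
      haveI : Nonempty (ℤ → A) := ⟨x₀⟩
      set h := Function.invFunOn f X with hhdef
      have hmem : ∀ y ∈ X, h y ∈ X ∧ f (h y) = y := by
        intro y hy
        have hex : ∃ a ∈ X, f a = y := by
          rw [← hsurj] at hy
          obtain ⟨a, ha, rfl⟩ := hy
          exact ⟨a, ha, rfl⟩
        exact ⟨Function.invFunOn_mem hex, Function.invFunOn_eq hex⟩
      have hfx : ∀ x ∈ X, f x ∈ X := fun x hx => hf.1 hx
      have hhf : ∀ x ∈ X, h (f x) = x := by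
        intro x hx
        obtain ⟨h1, h2⟩ := hmem (f x) (hfx x hx)
        exact hinj h1 hx h2
      have hcomm : ∀ x ∈ X, h (shiftMap x) = shiftMap (h x) := by
        intro x hx
        obtain ⟨h1, h2⟩ := hmem x hx
        have hx' : shiftMap x ∈ X := hSX x hx
        obtain ⟨h3, h4⟩ := hmem (shiftMap x) hx'
        have h5 : f (shiftMap (h x)) = shiftMap x := by rw [hf.2.2 (h x) h1, h2]
        exact hinj h3 (hSX _ h1) (h4.trans h5.symm)
      haveI : CompactSpace X := isCompact_iff_compactSpace.mp hXc
      set F : X → X := fun a => ⟨f a, hf.1 a.2⟩ with hF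
      have hFc : Continuous F :=
        Continuous.subtype_mk (continuousOn_iff_continuous_restrict.mp hf.2.1) _
      have hFbij : Function.Bijective F := by
        constructor
        · intro a b hab
          exact Subtype.ext (hinj a.2 b.2 (congrArg Subtype.val hab))
        · rintro ⟨y, hy⟩
          rw [← hsurj] at hy
          obtain ⟨a, ha, rfl⟩ := hy
          exact ⟨⟨a, ha⟩, rfl⟩
      set E := Equiv.ofBijective F hFbij with hE
      have hEc : Continuous ⇑E := hFc
      set G := hEc.homeoOfEquivCompactToT2 with hG
      have hrestr : X.restrict h = Subtype.val ∘ ⇑G.symm := by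
        funext y
        obtain ⟨h1, h2⟩ := hmem y.1 y.2
        have h3 : f ((G.symm y : X) : ℤ → A) = y :=
          congrArg Subtype.val (G.apply_symm_apply y)
        exact hinj h1 (G.symm y).2 (h2.trans h3.symm)
      have hconth : ContinuousOn h X := by
        rw [continuousOn_iff_continuous_restrict]; change Continuous (X.restrict h); rw [hrestr]
        exact continuous_subtype_val.comp G.symm.continuous
      refine ⟨h, ⟨fun y hy => (hmem y hy).1, hconth, hcomm⟩, ?_, ?_⟩
      · intro x hx
        exact congrArg f (hhf x hx)
      · intro x hx
        exact congrArg h (hmem x hx).2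
  · -- regular → injective
    rintro ⟨h, hh, e1, e2⟩ a ha b hb hab
    have hfhY : ∀ y ∈ X, f (h y) = y := by
      intro y hy
      rw [← hsurj] at hy
      obtain ⟨x, hx, rfl⟩ := hy
      exact e1 x hx
    have hYc : IsCompact (h '' X) := hXc.image_of_continuousOn hh.2.1
    have hYclosed : IsClosed (h '' X) := hYc.isClosed
    have hinjh : Set.InjOn h X := by
      intro a' ha' b' hb' hab'
      rw [← hfhY a' ha', ← hfhY b' hb', hab']
    have hiterX : ∀ q ∈ X, ∀ n : ℕ, shiftMap^[n] q ∈ X := by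
      intro q hq n
      induction n with
      | zero => simpa
      | succ n ih =>
        rw [Function.iterate_succ_apply']
        exact hSX _ ih
    have hcommiter : ∀ q ∈ X, ∀ n : ℕ, shiftMap^[n] (h q) = h (shiftMap^[n] q) := by
      intro q hq n
      induction n with
      | zero => simp
      | succ n ih =>
        rw [Function.iterate_succ_apply', ih, Function.iterate_succ_apply']
        exact (hh.2.2 _ (hiterX q hq n)).symm
    have hper : ∀ n : ℕ, 0 < n → ∀ p ∈ X, shiftMap^[n] p = p → p ∈ h '' X := by
      intro n hn p hp hpper
      set P : Set (ℤ → A) := {q | q ∈ X ∧ shiftMap^[n] q = q} with hPdef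
      have hprd : ∀ q : ℤ → A, q ∈ P → ∀ i : ℤ, q (i + n) = q i := by
        intro q hq i
        exact (shift_iter_apply q n i).symm.trans (congrFun hq.2 i)
      have hinjP : Set.InjOn (fun q : ℤ → A => fun k : Fin n => q k) P := by
        intro q1 hq1 q2 hq2 hq
        funext i
        have ht0 : 0 ≤ i % (n:ℤ) := Int.emod_nonneg i (by exact_mod_cast hn.ne')
        have htn : i % (n:ℤ) < n := Int.emod_lt_of_pos i (by exact_mod_cast hn)
        set t : ℕ := (i % (n:ℤ)).toNat with htdef
        have htc : (t:ℤ) = i % (n:ℤ) := Int.toNat_of_nonneg ht0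
        have htlt : t < n := by
          have : (t:ℤ) < n := by omega
          exact_mod_cast this
        have h1 := periodic_emod q1 n (hprd q1 hq1) i
        have h2 := periodic_emod q2 n (hprd q2 hq2) i
        rw [h1, h2, ← htc]
        exact congrFun hq (⟨t, htlt⟩ : Fin n)
      have hPfin : P.Finite :=
        Set.Finite.of_finite_image (Set.toFinite _) hinjP
      have hmapsTo : Set.MapsTo h P P := by
        intro q hq
        exact ⟨hh.1 hq.1, by rw [hcommiter q hq.1 n, hq.2]⟩
      have hinjhP : Set.InjOn h P := hinjh.mono (fun q hq => hq.1)
      have hbij := (hPfin.injOn_iff_bijOn_of_mapsTo hmapsTo).mp hinjhP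
      obtain ⟨q, hq, hqp⟩ := hbij.surjOn ⟨hp, hpper⟩
      exact ⟨q, hq.1, hqp⟩
    have hXY : X ⊆ h '' X := by
      intro x hx
      have hcl : x ∈ closure (h '' X) := by
        apply dense_aux
        intro m
        obtain ⟨p, hpX, ⟨n, hn, hper'⟩, hagree⟩ := periodic_approx X hXsft hXmix x hx m
        exact ⟨p, hper n hn p hpX hper', hagree⟩
      rwa [hYclosed.closure_eq] at hcl
    obtain ⟨a', ha', rfl⟩ := hXY ha
    obtain ⟨b', hb', rfl⟩ := hXY hb
    rw [← e2 a' ha', ← e2 b' hb', hab]
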